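/- arXiv:2307.09913 — 4 statements merged into one kernel-verified Lean document; each statement's English description precedes it below -/
import Mathlib

section
/- Let D be a domino tiling system with tile set T such that no tile has more than two white sides. If D covers ℤₙ × ℤₘ for some positive n, m via a map ξ, then the linearization of ξ (the interpretation with domain ℤ_{n·m}, r-edges { (i, i+1) }, each element x + y·n labelled by the unique concept C_{ξ(x,y)}, and named elements ld = 0, rd = n−1, lu = (m−1)·n, ru = m·n − 1) is a D-snake, i.e., it satisfies conditions (SPath), (SNoLoop), (SUniqTil), (SSpecTil), (SHori), (SLen), and (SVerti). -/
/-- A 4-sided tile with left, down, right, and up colours. -/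
structure Tile (Col : Type) where
  left : Col
  down : Col
  right : Col
  up : Col

/-- Horizontal compatibility: the right colour of t equals the left colour of t'. -/
def HCompat {Col : Type} (t t' : Tile Col) : Prop := t.right = t'.left

/-- Vertical compatibility: the up colour of t equals the down colour of t'. -/
def VCompat {Col : Type} (t t' : Tile Col) : Prop := t.up = t'.down

/-- The tile has (at least) two white sides. -/
def TwoWhite {Col : Type} (white : Col) (t : Tile Col) : Prop :=
  (t.left = white ∧ t.down = white) ∨ (t.left = white ∧ t.right = white) ∨
  (t.left = white ∧ t.up = white) ∨ (t.down = white ∧ t.right = white) ∨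
  (t.down = white ∧ t.up = white) ∨ (t.right = white ∧ t.up = white)

/-- The tile has (at least) three white sides. -/
def ThreeWhite {Col : Type} (white : Col) (t : Tile Col) : Prop :=
  (t.left = white ∧ t.down = white ∧ t.right = white) ∨
  (t.left = white ∧ t.down = white ∧ t.up = white) ∨
  (t.left = white ∧ t.right = white ∧ t.up = white) ∨
  (t.down = white ∧ t.right = white ∧ t.up = white)

/-- `ReachN r n d e`: e is reachable from d by a path of exactly n r-edges. -/
def ReachN {α : Type} (r : α → α → Prop) : ℕ → α → α → Prop
  | 0, d, e => d = e
  | n + 1, d, e => ∃ c, r d c ∧ ReachN r n c e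

/-- (SPath): an r⁺-path starting at ld, passing through rd, then lu, ending at ru. -/
def SPath {α : Type} (r : α → α → Prop) (ld rd lu ru : α) : Prop :=
  Relation.TransGen r ld rd ∧ Relation.TransGen r rd lu ∧ Relation.TransGen r lu ru

/-- (SNoLoop): no named element r⁺-reaches itself. -/
def SNoLoop {α : Type} (r : α → α → Prop) (ld rd lu ru : α) : Prop :=
  ¬ Relation.TransGen r ld ld ∧ ¬ Relation.TransGen r rd rd ∧
  ¬ Relation.TransGen r lu lu ∧ ¬ Relation.TransGen r ru ru

/-- (SUniqTil): every element r*-reachable from ld carries exactly one tile of T. -/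
def SUniqTil {Col α : Type} (T : Set (Tile Col)) (r : α → α → Prop)
    (label : α → Tile Col → Prop) (ld : α) : Prop :=
  ∀ d, Relation.ReflTransGen r ld d → ∃! t, t ∈ T ∧ label d t

/-- (SSpecTil): the named elements are exactly the r*-reachable elements carrying
tiles with two white sides, and the four corners carry the appropriate border tiles. -/
def SSpecTil {Col α : Type} (T : Set (Tile Col)) (white : Col) (r : α → α → Prop)
    (label : α → Tile Col → Prop) (ld rd lu ru : α) : Prop :=
  (∀ d, Relation.ReflTransGen r ld d →
    ((∃ t, t ∈ T ∧ label d t ∧ TwoWhite white t) ↔ (d = ld ∨ d = rd ∨ d = lu ∨ d = ru))) ∧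
  (∃ t ∈ T, label ld t ∧ t.left = white ∧ t.down = white) ∧
  (∃ t ∈ T, label rd t ∧ t.right = white ∧ t.down = white) ∧
  (∃ t ∈ T, label lu t ∧ t.left = white ∧ t.up = white) ∧
  (∃ t ∈ T, label ru t ∧ t.right = white ∧ t.up = white)

/-- (SHori): every r*-reachable element d ≠ ru carrying t has r-successors, all of
which carry one fixed tile t' that is H-compatible with t, with the border
conditions (ii) and (iii). -/
def SHori {Col α : Type} (T : Set (Tile Col)) (white : Col) (r : α → α → Prop)
    (label : α → Tile Col → Prop) (ld ru : α) : Prop :=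
  ∀ d t, Relation.ReflTransGen r ld d → d ≠ ru → t ∈ T → label d t →
    ∃ t' ∈ T, (∃ e, r d e) ∧ (∀ e, r d e → label e t') ∧ HCompat t t' ∧
      (t.down = white → (t.right ≠ white ↔ t'.down = white)) ∧
      (t.up = white → t'.up = white)

/-- (SLen) for a fixed N: all r⁺-paths from ld to rd have length N−1, and rd is
the only element r^{N−1}-reachable from ld. -/
def SLenN {α : Type} (r : α → α → Prop) (ld rd : α) (N : ℕ) : Prop :=
  0 < N ∧ (∀ k, 0 < k → ReachN r k ld rd → k = N - 1) ∧
  (∀ e, ReachN r (N - 1) ld e → e = rd)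

/-- (SVerti) for a fixed N: every r*-reachable element carrying a non-up-border
tile t has all its r^N-reachable elements carrying one fixed V-compatible tile t'
with matching left/right borders. -/
def SVertiN {Col α : Type} (T : Set (Tile Col)) (white : Col) (r : α → α → Prop)
    (label : α → Tile Col → Prop) (ld : α) (N : ℕ) : Prop :=
  ∀ d t, Relation.ReflTransGen r ld d → t ∈ T → label d t → t.up ≠ white →
    ∃ t' ∈ T, (∀ e, ReachN r N d e → label e t') ∧ VCompat t t' ∧
      (t.left = white ↔ t'.left = white) ∧ (t.right = white ↔ t'.right = white)

/-- A D-pseudosnake: (SPath), (SNoLoop), (SUniqTil), (SSpecTil), (SHori). -/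
def IsPseudoSnake {Col α : Type} (T : Set (Tile Col)) (white : Col)
    (r : α → α → Prop) (label : α → Tile Col → Prop) (ld rd lu ru : α) : Prop :=
  SPath r ld rd lu ru ∧ SNoLoop r ld rd lu ru ∧ SUniqTil T r label ld ∧
  SSpecTil T white r label ld rd lu ru ∧ SHori T white r label ld ru

/-- A D-snake: a D-pseudosnake that additionally satisfies (SLen) for a unique
positive integer N, and (SVerti) for that N. -/
def IsSnake {Col α : Type} (T : Set (Tile Col)) (white : Col)
    (r : α → α → Prop) (label : α → Tile Col → Prop) (ld rd lu ru : α) : Prop :=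
  IsPseudoSnake T white r label ld rd lu ru ∧
  ∃ N : ℕ, SLenN r ld rd N ∧ SVertiN T white r label ld N ∧
    ∀ N', SLenN r ld rd N' → N' = N

/-- ξ covers the n × m grid: tiles from T, white sides exactly on the borders,
horizontal and vertical compatibility. -/
def Covers {Col : Type} (T : Set (Tile Col)) (white : Col) (n m : ℕ)
    (ξ : ℕ → ℕ → Tile Col) : Prop :=
  ∀ x y, x < n → y < m →
    ξ x y ∈ T ∧
    ((ξ x y).left = white ↔ x = 0) ∧ ((ξ x y).right = white ↔ x = n - 1) ∧
    ((ξ x y).down = white ↔ y = 0) ∧ ((ξ x y).up = white ↔ y = m - 1) ∧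
    (x + 1 < n → HCompat (ξ x y) (ξ (x + 1) y)) ∧
    (y + 1 < m → VCompat (ξ x y) (ξ x (y + 1)))

lemma reachN_iff_lin {M : ℕ} (k : ℕ) (a b : Fin M) :
    ReachN (fun i j : Fin M => (j : ℕ) = (i : ℕ) + 1) k a b ↔ (b : ℕ) = (a : ℕ) + k := by
  induction k generalizing a with
  | zero =>
    simp only [ReachN, Nat.add_zero, Fin.ext_iff]
    exact eq_comm
  | succ k ih =>
    simp only [ReachN]
    constructor
    · rintro ⟨c, hc, h⟩
      rw [ih] at h
      omega
    · intro h
      have hb := b.isLt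
      have hc : (a : ℕ) + 1 < M := by omega
      exact ⟨⟨(a : ℕ) + 1, hc⟩, rfl, (ih _).mpr (by simpa using by omega)⟩

lemma reachN_transGen_lin {M : ℕ} (k : ℕ) (a b : Fin M)
    (h : ReachN (fun i j : Fin M => (j : ℕ) = (i : ℕ) + 1) (k + 1) a b) :
    Relation.TransGen (fun i j : Fin M => (j : ℕ) = (i : ℕ) + 1) a b := by
  induction k generalizing a with
  | zero =>
    obtain ⟨c, hc, h⟩ := h
    cases h
    exact Relation.TransGen.single hc
  | succ k ih =>
    obtain ⟨c, hc, h⟩ := h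
    exact Relation.TransGen.head hc (ih _ h)

lemma transGen_iff_lin {M : ℕ} (a b : Fin M) :
    Relation.TransGen (fun i j : Fin M => (j : ℕ) = (i : ℕ) + 1) a b ↔ (a : ℕ) < (b : ℕ) := by
  constructor
  · intro h
    induction h with
    | single h => omega
    | tail _ h ih => omega
  · intro h
    have hr : ReachN (fun i j : Fin M => (j : ℕ) = (i : ℕ) + 1) (((b : ℕ) - a - 1) + 1) a b :=
      (reachN_iff_lin _ a b).mpr (by omega)
    exact reachN_transGen_lin _ a b hr

lemma reflTransGen_lin {M : ℕ} (a b : Fin M) (h : (a : ℕ) ≤ (b : ℕ)) :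
    Relation.ReflTransGen (fun i j : Fin M => (j : ℕ) = (i : ℕ) + 1) a b := by
  rcases Nat.eq_or_lt_of_le h with h | h
  · exact (Fin.ext h) ▸ Relation.ReflTransGen.refl
  · exact ((transGen_iff_lin a b).mpr h).to_reflTransGen

/-- If a domino tiling system D (with no tile having more than two white sides)
covers ℤₙ × ℤₘ via ξ, then the linearization of ξ — domain ℤ_{n·m}, r-edges
{(i, i+1)}, element x + y·n labelled by ξ(x, y), and named elements ld = 0,
rd = n−1, lu = (m−1)·n, ru = m·n−1 — is a D-snake. -/
theorem covering_gives_snake {Col : Type} (T : Set (Tile Col)) (white : Col)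
    (hT : ∀ t ∈ T, ¬ ThreeWhite white t)
    (n m : ℕ) (hn : 0 < n) (hm : 0 < m)
    (ξ : ℕ → ℕ → Tile Col) (hξ : Covers T white n m ξ) :
    IsSnake T white
      (fun i j : Fin (n * m) => (j : ℕ) = (i : ℕ) + 1)
      (fun (i : Fin (n * m)) (t : Tile Col) => t = ξ ((i : ℕ) % n) ((i : ℕ) / n))
      ⟨0, Nat.mul_pos hn hm⟩
      ⟨n - 1, by
        have h1 : n ≤ n * m := Nat.le_mul_of_pos_right n hm
        omega⟩
      ⟨(m - 1) * n, by
        have h1 : (m - 1) * n = m * n - n := Nat.sub_one_mul m n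
        have h2 : n ≤ m * n := Nat.le_mul_of_pos_left n hm
        have h3 : m * n = n * m := Nat.mul_comm m n
        omega⟩
      ⟨n * m - 1, Nat.sub_lt (Nat.mul_pos hn hm) one_pos⟩ := by
  have E1 : (m - 1) * n = m * n - n := Nat.sub_one_mul m n
  have E2 : m * n = n * m := Nat.mul_comm m n
  have E3 : n ≤ m * n := Nat.le_mul_of_pos_left n hm
  have hn2 : 2 ≤ n := by
    by_contra h
    obtain ⟨hmem, hl, hr, hd, hu, -, -⟩ := hξ 0 0 hn hm
    exact hT _ hmem (Or.inl ⟨hl.mpr rfl, hd.mpr rfl, hr.mpr (by omega)⟩)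
  have hm2 : 2 ≤ m := by
    by_contra h
    obtain ⟨hmem, hl, hr, hd, hu, -, -⟩ := hξ 0 0 hn hm
    exact hT _ hmem (Or.inr (Or.inl ⟨hl.mpr rfl, hd.mpr rfl, hu.mpr (by omega)⟩))
  have E4 : n ≤ (m - 1) * n := Nat.le_mul_of_pos_left n (by omega)
  have key : ∀ d : Fin (n * m), (d : ℕ) % n < n ∧ (d : ℕ) / n < m := fun d =>
    ⟨Nat.mod_lt _ hn, (Nat.div_lt_iff_lt_mul hn).mpr (by have := d.isLt; omega)⟩
  have coord : ∀ x y : ℕ, x < n → (x + y * n) % n = x ∧ (x + y * n) / n = y := by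
    intro x y hx
    constructor
    · rw [Nat.add_mul_mod_self_right, Nat.mod_eq_of_lt hx]
    · rw [Nat.add_mul_div_right _ _ hn, Nat.div_eq_of_lt hx, Nat.zero_add]
  have decomp : ∀ d : Fin (n * m), (d : ℕ) = (d : ℕ) % n + ((d : ℕ) / n) * n :=
    fun d => (Nat.mod_add_div' (d : ℕ) n).symm
  refine ⟨⟨?_, ?_, ?_, ?_, ?_⟩, n, ?_, ?_, ?_⟩
  · -- SPath
    exact ⟨(transGen_iff_lin _ _).mpr (show (0 : ℕ) < n - 1 by omega),
      (transGen_iff_lin _ _).mpr (show (n - 1 : ℕ) < (m - 1) * n by omega),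
      (transGen_iff_lin _ _).mpr (show ((m - 1) * n : ℕ) < n * m - 1 by omega)⟩
  · -- SNoLoop
    refine ⟨fun h => ?_, fun h => ?_, fun h => ?_, fun h => ?_⟩ <;>
      exact absurd ((transGen_iff_lin _ _).mp h) (lt_irrefl _)
  · -- SUniqTil
    intro d _
    exact ⟨ξ ((d : ℕ) % n) ((d : ℕ) / n), ⟨(hξ _ _ (key d).1 (key d).2).1, rfl⟩,
      fun t ht => ht.2⟩
  · -- SSpecTil
    refine ⟨?_, ?_, ?_, ?_, ?_⟩
    · intro d _
      obtain ⟨hmem, hl, hr, hd2, hu, -, -⟩ := hξ _ _ (key d).1 (key d).2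
      constructor
      · rintro ⟨t, htT, rfl, htw⟩
        rw [TwoWhite, hl, hr, hd2, hu] at htw
        have hdd := decomp d
        have hx := (key d).1
        have hy := (key d).2
        rcases htw with ⟨h1, h2⟩ | ⟨h1, h2⟩ | ⟨h1, h2⟩ | ⟨h1, h2⟩ | ⟨h1, h2⟩ | ⟨h1, h2⟩
        · rw [h1, h2] at hdd
          exact Or.inl (Fin.ext (show (d : ℕ) = 0 by omega))
        · exfalso; omega
        · rw [h1, h2] at hdd
          exact Or.inr (Or.inr (Or.inl (Fin.ext (show (d : ℕ) = (m - 1) * n by omega))))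
        · rw [h2, h1] at hdd
          exact Or.inr (Or.inl (Fin.ext (show (d : ℕ) = n - 1 by omega)))
        · exfalso; omega
        · rw [h1, h2] at hdd
          exact Or.inr (Or.inr (Or.inr (Fin.ext (show (d : ℕ) = n * m - 1 by omega))))
      · intro hcor
        refine ⟨ξ ((d : ℕ) % n) ((d : ℕ) / n), hmem, rfl, ?_⟩
        rw [TwoWhite, hl, hr, hd2, hu]
        rcases hcor with h | h | h | h
        · have hv : (d : ℕ) = 0 := congrArg Fin.val h
          have e1 : (d : ℕ) % n = 0 := by rw [hv]; exact Nat.zero_mod n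
          have e2 : (d : ℕ) / n = 0 := by rw [hv]; exact Nat.zero_div n
          exact Or.inl ⟨e1, e2⟩
        · have hv : (d : ℕ) = n - 1 := congrArg Fin.val h
          have e1 : (d : ℕ) % n = n - 1 := by rw [hv]; exact Nat.mod_eq_of_lt (by omega)
          have e2 : (d : ℕ) / n = 0 := by rw [hv]; exact Nat.div_eq_of_lt (by omega)
          exact Or.inr (Or.inr (Or.inr (Or.inl ⟨e2, e1⟩)))
        · have hv : (d : ℕ) = (m - 1) * n := congrArg Fin.val h
          have e1 : (d : ℕ) % n = 0 := by rw [hv]; exact Nat.mul_mod_left _ _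
          have e2 : (d : ℕ) / n = m - 1 := by rw [hv]; exact Nat.mul_div_cancel _ hn
          exact Or.inr (Or.inr (Or.inl ⟨e1, e2⟩))
        · have hv : (d : ℕ) = n * m - 1 := congrArg Fin.val h
          have hrw : n * m - 1 = (n - 1) + (m - 1) * n := by omega
          have hc := coord (n - 1) (m - 1) (by omega)
          have e1 : (d : ℕ) % n = n - 1 := by rw [hv, hrw]; exact hc.1
          have e2 : (d : ℕ) / n = m - 1 := by rw [hv, hrw]; exact hc.2
          exact Or.inr (Or.inr (Or.inr (Or.inr (Or.inr ⟨e1, e2⟩))))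
    · refine ⟨ξ 0 0, (hξ 0 0 hn hm).1, ?_, (hξ 0 0 hn hm).2.1.mpr rfl,
        (hξ 0 0 hn hm).2.2.2.1.mpr rfl⟩
      show ξ 0 0 = ξ (0 % n) (0 / n)
      rw [Nat.zero_mod, Nat.zero_div]
    · have hc := coord (n - 1) 0 (by omega)
      simp only [Nat.zero_mul, Nat.add_zero] at hc
      refine ⟨ξ (n - 1) 0, (hξ (n - 1) 0 (by omega) hm).1, ?_,
        (hξ (n - 1) 0 (by omega) hm).2.2.1.mpr rfl,
        (hξ (n - 1) 0 (by omega) hm).2.2.2.1.mpr rfl⟩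
      show ξ (n - 1) 0 = ξ ((n - 1) % n) ((n - 1) / n)
      rw [hc.1, hc.2]
    · have hc := coord 0 (m - 1) hn
      simp only [Nat.zero_add] at hc
      refine ⟨ξ 0 (m - 1), (hξ 0 (m - 1) hn (by omega)).1, ?_,
        (hξ 0 (m - 1) hn (by omega)).2.1.mpr rfl,
        (hξ 0 (m - 1) hn (by omega)).2.2.2.2.1.mpr rfl⟩
      show ξ 0 (m - 1) = ξ (((m - 1) * n) % n) (((m - 1) * n) / n)
      rw [hc.1, hc.2]
    · have hc := coord (n - 1) (m - 1) (by omega)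
      have hrw : n * m - 1 = (n - 1) + (m - 1) * n := by omega
      refine ⟨ξ (n - 1) (m - 1), (hξ (n - 1) (m - 1) (by omega) (by omega)).1, ?_,
        (hξ (n - 1) (m - 1) (by omega) (by omega)).2.2.1.mpr rfl,
        (hξ (n - 1) (m - 1) (by omega) (by omega)).2.2.2.2.1.mpr rfl⟩
      show ξ (n - 1) (m - 1) = ξ ((n * m - 1) % n) ((n * m - 1) / n)
      rw [hrw, hc.1, hc.2]
  · -- SHori
    intro d t _ hne htT hlab
    subst hlab
    have hx := (key d).1
    have hy := (key d).2
    have hdd := decomp d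
    have hdne : (d : ℕ) ≠ n * m - 1 := fun h => hne (Fin.ext h)
    have hdlt : (d : ℕ) + 1 < n * m := by have := d.isLt; omega
    obtain ⟨hmem, hl, hr, hd2, hu, hH, hV⟩ := hξ _ _ hx hy
    by_cases hxc : (d : ℕ) % n + 1 < n
    · -- same row
      have hc := coord ((d : ℕ) % n + 1) ((d : ℕ) / n) hxc
      refine ⟨ξ ((d : ℕ) % n + 1) ((d : ℕ) / n), (hξ _ _ hxc hy).1,
        ⟨⟨(d : ℕ) + 1, hdlt⟩, rfl⟩, ?_, hH hxc, ?_, ?_⟩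
      · intro e he
        have hv2 : (e : ℕ) = (d : ℕ) % n + 1 + ((d : ℕ) / n) * n := by omega
        show ξ ((d : ℕ) % n + 1) ((d : ℕ) / n) = ξ ((e : ℕ) % n) ((e : ℕ) / n)
        rw [hv2, hc.1, hc.2]
      · intro hdw
        obtain ⟨-, -, -, hd2', -, -, -⟩ := hξ _ _ hxc hy
        have hy0 : (d : ℕ) / n = 0 := hd2.mp hdw
        constructor
        · intro _; exact hd2'.mpr hy0
        · intro _ hcon
          have := hr.mp hcon
          omega
      · intro hupw
        obtain ⟨-, -, -, -, hu', -, -⟩ := hξ _ _ hxc hy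
        exact hu'.mpr (hu.mp hupw)
    · -- wrap to next row
      have hxeq : (d : ℕ) % n = n - 1 := by omega
      have hsm : ((d : ℕ) / n + 1) * n = ((d : ℕ) / n) * n + n := Nat.succ_mul _ _
      have hy1 : (d : ℕ) / n + 1 < m := by
        by_contra hcon
        have hym : (d : ℕ) / n = m - 1 := by omega
        rw [hxeq, hym] at hdd
        omega
      have hc := coord 0 ((d : ℕ) / n + 1) hn
      simp only [Nat.zero_add] at hc
      obtain ⟨hmem', hl', hr', hd2', hu', -, -⟩ := hξ 0 ((d : ℕ) / n + 1) hn hy1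
      refine ⟨ξ 0 ((d : ℕ) / n + 1), hmem', ⟨⟨(d : ℕ) + 1, hdlt⟩, rfl⟩, ?_, ?_, ?_, ?_⟩
      · intro e he
        have hv2 : (e : ℕ) = ((d : ℕ) / n + 1) * n := by omega
        show ξ 0 ((d : ℕ) / n + 1) = ξ ((e : ℕ) % n) ((e : ℕ) / n)
        rw [hv2, hc.1, hc.2]
      · show (ξ ((d : ℕ) % n) ((d : ℕ) / n)).right = (ξ 0 ((d : ℕ) / n + 1)).left
        rw [hr.mpr hxeq, hl'.mpr rfl]
      · intro hdw
        refine iff_of_false (fun hcon => hcon (hr.mpr hxeq)) (fun hcon => ?_)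
        exact absurd (hd2'.mp hcon) (Nat.succ_ne_zero _)
      · intro hupw
        exfalso
        apply hdne
        have hym : (d : ℕ) / n = m - 1 := hu.mp hupw
        rw [hxeq, hym] at hdd
        omega
  · -- SLenN
    refine ⟨hn, fun k hk hrch => ?_, fun e he => ?_⟩
    · rw [reachN_iff_lin] at hrch
      have h' : n - 1 = 0 + k := hrch
      omega
    · rw [reachN_iff_lin] at he
      have h' : (e : ℕ) = 0 + (n - 1) := he
      exact Fin.ext (show (e : ℕ) = n - 1 by omega)
  · -- SVertiN
    intro d t _ htT hlab hup
    subst hlab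
    have hx := (key d).1
    have hy := (key d).2
    have hdd := decomp d
    obtain ⟨hmem, hl, hr, hd2, hu, hH, hV⟩ := hξ _ _ hx hy
    have hy1 : (d : ℕ) / n + 1 < m := by
      rcases Nat.lt_or_ge ((d : ℕ) / n + 1) m with h | h
      · exact h
      · exact absurd (hu.mpr (by omega)) hup
    have hsm : ((d : ℕ) / n + 1) * n = ((d : ℕ) / n) * n + n := Nat.succ_mul _ _
    have hc := coord ((d : ℕ) % n) ((d : ℕ) / n + 1) hx
    obtain ⟨hmem', hl', hr', hd2', hu', -, -⟩ := hξ _ _ hx hy1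
    refine ⟨ξ ((d : ℕ) % n) ((d : ℕ) / n + 1), hmem', ?_, hV hy1, ?_, ?_⟩
    · intro e he
      rw [reachN_iff_lin] at he
      have hv2 : (e : ℕ) = (d : ℕ) % n + ((d : ℕ) / n + 1) * n := by omega
      show ξ ((d : ℕ) % n) ((d : ℕ) / n + 1) = ξ ((e : ℕ) % n) ((e : ℕ) / n)
      rw [hv2, hc.1, hc.2]
    · rw [hl, hl']
    · rw [hr, hr']
  · -- uniqueness of N
    rintro N' ⟨hN'pos, h2, -⟩
    have hr : ReachN (fun i j : Fin (n * m) => (j : ℕ) = (i : ℕ) + 1) (n - 1)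
        ⟨0, Nat.mul_pos hn hm⟩
        ⟨n - 1, by have h1 : n ≤ n * m := Nat.le_mul_of_pos_right n hm; omega⟩ :=
      (reachN_iff_lin _ _ _).mpr (show (n - 1 : ℕ) = 0 + (n - 1) by omega)
    have := h2 (n - 1) (by omega) hr
    omega
end

section
/- Let ξ : 𝕆 → T be a map from the octant 𝕆 = { (n,m) : 0 ≤ m ≤ n } to the tiles of a white-bordered tiling system D that covers 𝕆. Then for all i ∈ ℕ, ξ(i, i) is the all-white tile, ξ(i+1, i) is left- and up-bordered, and no position (i, j) with 0 < j < i−1 carries a tile containing the white colour. -/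
/-- The all-white tile. -/
def whiteTile {Col : Type} (white : Col) : Tile Col :=
  ⟨white, white, white, white⟩

/-- A white-bordered tiling system: the all-white tile belongs to T, and every
other tile of T containing white is both left- and up-border but neither down-
nor right-border. -/
def WhiteBordered {Col : Type} (T : Set (Tile Col)) (white : Col) : Prop :=
  whiteTile white ∈ T ∧
  ∀ t ∈ T, t ≠ whiteTile white →
    (t.left = white ∨ t.down = white ∨ t.right = white ∨ t.up = white) →
    (t.left = white ∧ t.up = white ∧ t.down ≠ white ∧ t.right ≠ white)

/-- ξ covers the octant 𝕆 = { (n, m) : m ≤ n }: tiles of T everywhere on 𝕆, and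
conditions (OInit), (OVerti), (OHori). -/
def CoversOctant {Col : Type} (T : Set (Tile Col)) (white : Col)
    (ξ : ℕ → ℕ → Tile Col) : Prop :=
  (∀ n m : ℕ, m ≤ n → ξ n m ∈ T) ∧
  -- (OInit)
  (ξ 0 0 = whiteTile white ∧ ξ 1 0 ≠ whiteTile white) ∧
  -- (OVerti)
  (∀ n m : ℕ, m + 1 ≤ n → VCompat (ξ n m) (ξ n (m + 1))) ∧
  -- (OHori)
  (∀ n m : ℕ, m ≤ n → HCompat (ξ n m) (ξ (n + 1) m))

/-- If a white-bordered tiling system D covers the octant via ξ, then for every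
i, ξ(i, i) is the all-white tile, ξ(i+1, i) is left- and up-bordered, and no
position (i, j) with 0 < j < i−1 carries a tile containing white. -/
theorem octant_covering_white_diagonal {Col : Type} (T : Set (Tile Col))
    (white : Col) (hW : WhiteBordered T white)
    (ξ : ℕ → ℕ → Tile Col) (hξ : CoversOctant T white ξ) :
    ∀ i : ℕ,
      ξ i i = whiteTile white ∧
      ((ξ (i + 1) i).left = white ∧ (ξ (i + 1) i).up = white) ∧
      ∀ j : ℕ, 0 < j → j + 1 < i →
        (ξ i j).left ≠ white ∧ (ξ i j).down ≠ white ∧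
        (ξ i j).right ≠ white ∧ (ξ i j).up ≠ white := by
  obtain ⟨hwT, hB⟩ := hW
  obtain ⟨hmem, ⟨h00, h10⟩, hV, hH⟩ := hξ
  -- The subdiagonal tile is never the all-white tile.
  have hL : ∀ n : ℕ, ξ (n + 1) n ≠ whiteTile white := by
    intro n
    induction n with
    | zero => exact h10
    | succ k ih =>
      intro hw
      have hv := hV (k + 2) k (by omega)
      have hup : (ξ (k + 2) k).up = white := by
        rw [VCompat] at hv; rw [hv, hw]; rfl
      have hleft : (ξ (k + 2) k).left = white := by
        by_cases h : ξ (k + 2) k = whiteTile white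
        · rw [h]; rfl
        · exact (hB _ (hmem _ _ (by omega)) h (Or.inr (Or.inr (Or.inr hup)))).1
      have hh := hH (k + 1) k (by omega)
      rw [HCompat] at hh
      have hr : (ξ (k + 1) k).right = white := by rw [hh, hleft]
      exact (hB _ (hmem _ _ (by omega)) ih (Or.inr (Or.inr (Or.inl hr)))).2.2.2 hr
  -- No tile strictly below the diagonal is the all-white tile.
  have hM : ∀ n j : ℕ, j < n → ξ n j ≠ whiteTile white := by
    intro n
    induction n with
    | zero => intro j hj; omega
    | succ k ih =>
      intro j hj hw
      rcases Nat.lt_or_ge j k with h | h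
      · have hh := hH k j (le_of_lt h)
        rw [HCompat] at hh
        have hr : (ξ k j).right = white := by rw [hh, hw]; rfl
        have hkw : ξ k j = whiteTile white := by
          by_contra hne
          exact (hB _ (hmem _ _ (le_of_lt h)) hne (Or.inr (Or.inr (Or.inl hr)))).2.2.2 hr
        exact ih j h hkw
      · have hjk : j = k := by omega
        subst hjk
        exact hL j hw
  -- The diagonal is all-white.
  have hD : ∀ i : ℕ, ξ i i = whiteTile white := by
    intro i
    induction i with
    | zero => exact h00
    | succ k ih =>
      have hh := hH k k le_rfl
      rw [HCompat] at hh
      have hl : (ξ (k + 1) k).left = white := by rw [← hh, ih]; rfl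
      have hup := (hB _ (hmem _ _ (by omega)) (hL k) (Or.inl hl)).2.1
      have hv := hV (k + 1) k le_rfl
      rw [VCompat] at hv
      have hd : (ξ (k + 1) (k + 1)).down = white := by rw [← hv, hup]
      by_contra hne
      exact (hB _ (hmem _ _ le_rfl) hne (Or.inr (Or.inl hd))).2.2.1 hd
  intro i
  refine ⟨hD i, ?_, ?_⟩
  · have hh := hH i i le_rfl
    rw [HCompat] at hh
    have hl : (ξ (i + 1) i).left = white := by rw [← hh, hD i]; rfl
    exact ⟨hl, (hB _ (hmem _ _ (by omega)) (hL i) (Or.inl hl)).2.1⟩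
  · intro j hj hji
    obtain ⟨k, rfl⟩ : ∃ k, i = k + 1 := ⟨i - 1, by omega⟩
    have hne := hM (k + 1) j (by omega)
    have hno : ((ξ (k + 1) j).left = white ∨ (ξ (k + 1) j).down = white ∨
        (ξ (k + 1) j).right = white ∨ (ξ (k + 1) j).up = white) → False := by
      intro hor
      have hl := (hB _ (hmem _ _ (by omega)) hne hor).1
      have hh := hH k j (by omega)
      rw [HCompat] at hh
      have hr : (ξ k j).right = white := by rw [hh, hl]
      have hkw : ξ k j = whiteTile white := by
        by_contra hne'
        exact (hB _ (hmem _ _ (by omega)) hne' (Or.inr (Or.inr (Or.inl hr)))).2.2.2 hr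
      exact hM k j (by omega) hkw
    exact ⟨fun h => hno (Or.inl h), fun h => hno (Or.inr (Or.inl h)),
      fun h => hno (Or.inr (Or.inr (Or.inl h))),
      fun h => hno (Or.inr (Or.inr (Or.inr h)))⟩
end

section
/- A domino tiling system D (without white-bordered tiles) almost covers the octant if and only if the augmented system D' covers the octant (in the white-bordered sense), where D' adds to the tile set T the all-white tile and, for each tile (c_l, c_d, c_r, c_u) ∈ T, the tile (white, c_d, c_r, white). -/
/-- ξ almost covers the octant: tiles of T on 𝕆 with (OVerti) and (OHori),
but not necessarily (OInit). -/
def AlmostCoversOctant {Col : Type} (T : Set (Tile Col))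
    (ξ : ℕ → ℕ → Tile Col) : Prop :=
  (∀ n m : ℕ, m ≤ n → ξ n m ∈ T) ∧
  (∀ n m : ℕ, m + 1 ≤ n → VCompat (ξ n m) (ξ n (m + 1))) ∧
  (∀ n m : ℕ, m ≤ n → HCompat (ξ n m) (ξ (n + 1) m))

/-- The augmented tile set T' of the system D': the all-white tile, the tiles of
T, and for each (c_l, c_d, c_r, c_u) ∈ T the tile (white, c_d, c_r, white). -/
def augment {Col : Type} (T : Set (Tile Col)) (white : Col) : Set (Tile Col) :=
  insert (whiteTile white)
    (T ∪ {t' | ∃ t ∈ T, t' = ⟨white, t.down, t.right, white⟩})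

/-- A tiling system D without white-bordered tiles almost covers the octant iff
the augmented white-bordered system D' covers the octant. -/
theorem almost_covers_iff_augmented_covers {Col : Type} (T : Set (Tile Col))
    (white : Col)
    (hT : ∀ t ∈ T, t.left ≠ white ∧ t.down ≠ white ∧ t.right ≠ white ∧ t.up ≠ white) :
    (∃ ξ : ℕ → ℕ → Tile Col, AlmostCoversOctant T ξ) ↔
    (∃ ξ : ℕ → ℕ → Tile Col, CoversOctant (augment T white) white ξ) := by
  constructor
  · rintro ⟨ξ, hmem, hv, hh⟩
    refine ⟨fun n m => if m = n then whiteTile white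
      else if m + 1 = n then ⟨white, (ξ m m).down, (ξ m m).right, white⟩
      else ξ (n - 1) m, ?_, ⟨?_, ?_⟩, ?_, ?_⟩
    · intro n m hmn
      by_cases h1 : m = n
      · simp only [if_pos h1]
        exact Or.inl rfl
      · by_cases h2 : m + 1 = n
        · simp only [if_neg h1, if_pos h2]
          exact Or.inr (Or.inr ⟨ξ m m, hmem m m le_rfl, rfl⟩)
        · simp only [if_neg h1, if_neg h2]
          exact Or.inr (Or.inl (hmem (n-1) m (by omega)))
    · simp
    · intro he
      have he' : (Tile.mk white (ξ 0 0).down (ξ 0 0).right white) = whiteTile white := by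
        simpa using he
      exact (hT _ (hmem 0 0 le_rfl)).2.1 (congrArg Tile.down he')
    · intro n m hmn
      by_cases h2 : m + 1 = n
      · simp only [if_neg (by omega : ¬ m = n), if_pos h2, if_pos h2.symm.symm]
        show _ = _
        simp only [if_pos rfl, whiteTile]
      · have h3 : m + 2 ≤ n := by omega
        by_cases h4 : m + 2 = n
        · simp only [if_neg (by omega : ¬ m = n), if_neg h2,
            if_neg (by omega : ¬ m + 1 = n), if_pos (by omega : m + 1 + 1 = n)]
          show (ξ (n-1) m).up = (ξ (m+1) (m+1)).down
          have := hv (m+1) m le_rfl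
          have hn1 : n - 1 = m + 1 := by omega
          rw [hn1]
          exact this
        · simp only [if_neg (by omega : ¬ m = n), if_neg h2,
            if_neg (by omega : ¬ m + 1 = n), if_neg (by omega : ¬ m + 1 + 1 = n)]
          exact hv (n-1) m (by omega)
    · intro n m hmn
      by_cases h1 : m = n
      · subst h1
        simp only [if_pos rfl, if_neg (by omega : ¬ m = m + 1),
          if_pos (by omega : m + 1 = m + 1)]
        show (whiteTile white).right = _
        simp [whiteTile]
      · by_cases h2 : m + 1 = n
        · simp only [if_neg h1, if_pos h2, if_neg (by omega : ¬ m = n + 1),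
            if_neg (by omega : ¬ m + 1 = n + 1)]
          show (Tile.mk white (ξ m m).down (ξ m m).right white).right = (ξ (n+1-1) m).left
          have hn1 : n + 1 - 1 = m + 1 := by omega
          rw [hn1]
          exact hh m m le_rfl
        · simp only [if_neg h1, if_neg h2, if_neg (by omega : ¬ m = n + 1),
            if_neg (by omega : ¬ m + 1 = n + 1)]
          have hn1 : n + 1 - 1 = (n - 1) + 1 := by omega
          rw [hn1]
          exact hh (n-1) m (by omega)
  · rintro ⟨ξ, hmem, ⟨hinit0, hinit1⟩, hv, hh⟩
    have classify : ∀ t ∈ augment T white,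
        t = whiteTile white ∨ t ∈ T ∨ ∃ s ∈ T, t = ⟨white, s.down, s.right, white⟩ := by
      intro t ht
      simp only [augment, Set.mem_insert_iff, Set.mem_union, Set.mem_setOf_eq] at ht
      tauto
    have rightNe : ∀ t ∈ augment T white, t ≠ whiteTile white → t.right ≠ white := by
      intro t ht hne
      rcases classify t ht with h | h | ⟨s, hs, rfl⟩
      · exact absurd h hne
      · exact (hT t h).2.2.1
      · exact (hT s hs).2.2.1
    have stepH : ∀ n m, m ≤ n → (ξ n m).right ≠ white → ξ (n+1) m ∈ T := by
      intro n m h hr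
      have hL : (ξ (n+1) m).left ≠ white := by
        rw [← hh n m h]; exact hr
      rcases classify _ (hmem (n+1) m (by omega)) with he | he | ⟨s, hs, he⟩
      · rw [he] at hL; exact absurd rfl hL
      · exact he
      · rw [he] at hL; exact absurd rfl hL
    have row0 : ∀ n, ξ (n+2) 0 ∈ T := by
      intro n
      induction n with
      | zero => exact stepH 1 0 (by omega) (rightNe _ (hmem 1 0 (by omega)) hinit1)
      | succ k ih => exact stepH (k+2) 0 (by omega) (hT _ ih).2.2.1
    have diag : ∀ n m, m + 1 ≤ n → ξ n m ∈ T → ξ (n+1) (m+1) ∈ T := by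
      intro n m h ht
      apply stepH n (m+1) h
      have hd : (ξ n (m+1)).down ≠ white := by
        rw [← hv n m h]; exact (hT _ ht).2.2.2
      apply rightNe _ (hmem n (m+1) h)
      intro he
      rw [he] at hd
      exact hd rfl
    have key : ∀ m n, m + 2 ≤ n → ξ n m ∈ T := by
      intro m
      induction m with
      | zero =>
        intro n hn
        obtain ⟨k, rfl⟩ : ∃ k, n = k + 2 := ⟨n - 2, by omega⟩
        exact row0 k
      | succ k ih =>
        intro n hn
        obtain ⟨l, rfl⟩ : ∃ l, n = l + 1 := ⟨n - 1, by omega⟩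
        exact diag l k (by omega) (ih l (by omega))
    refine ⟨fun n m => ξ (n+2) m, ?_, ?_, ?_⟩
    · intro n m hmn
      exact key m (n+2) (by omega)
    · intro n m hmn
      exact hv (n+2) m (by omega)
    · intro n m hmn
      have := hh (n+2) m (by omega)
      show HCompat (ξ (n+2) m) (ξ (n+1+2) m)
      have he : n + 1 + 2 = n + 2 + 1 := by omega
      rw [he]
      exact this
end

section
/- Let D = (Col, T, white) be a white-bordered tiling system. If D covers the octant via ξ : 𝕆 → T, then there exists a proper T-hyperoctant representing ξ; conversely, the map represented by any proper T-hyperoctant covers the octant. -/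
/-- Points (n, m, k) hosting the hyperoctant: the octant part is
{ (n, m, k) : 0 ≤ n, m ≤ n, k ≤ N } and the incoming prefix is
{ (−i−1, 0, 0) : i ∈ ℤ_N }. -/
abbrev Pt : Type := ℤ × ℕ × ℕ

/-- The role r of a T-hyperoctant: edges (n, 0, 0) → (n+1, 0, 0) along the
bottom row, including the incoming prefix starting at (−N, 0, 0). -/
def rRel (N : ℕ) (p q : Pt) : Prop :=
  p.2.1 = 0 ∧ p.2.2 = 0 ∧ q.2.1 = 0 ∧ q.2.2 = 0 ∧
  q.1 = p.1 + 1 ∧ -(N : ℤ) ≤ p.1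

/-- The role s of a T-hyperoctant: edges (n, m, 0) → (n, m+1, 0) for m < n
inside the octant, and (n, m, k) → (n, m, k+1) for k < N on the outgoing
paths. -/
def sRel (N : ℕ) (p q : Pt) : Prop :=
  q.1 = p.1 ∧ 0 ≤ p.1 ∧
  ((p.2.2 = 0 ∧ q.2.2 = 0 ∧ q.2.1 = p.2.1 + 1 ∧ (q.2.1 : ℤ) ≤ p.1) ∨
   (q.2.1 = p.2.1 ∧ q.2.2 = p.2.2 + 1 ∧ (p.2.1 : ℤ) ≤ p.1 ∧ q.2.2 ≤ N))

/-- The concept In: the inner (octant) elements 𝕆 × {0}. -/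
def InSet : Set Pt :=
  {p | 0 ≤ p.1 ∧ (p.2.1 : ℤ) ≤ p.1 ∧ p.2.2 = 0}

/-- The concept Cur: (n, m, k) ∈ Cur iff (n, m, 0) is an octant position
carrying the tile t_k (where ξ gives the index of the tile carried at each
octant position). -/
def CurSet (N : ℕ) (ξ : ℕ → ℕ → Fin N) : Set Pt :=
  {p | 0 ≤ p.1 ∧ (p.2.1 : ℤ) ≤ p.1 ∧ (ξ p.1.toNat p.2.1 : ℕ) + 1 = p.2.2}

/-- The constraints on the concept Prev of a T-hyperoctant: Prev holds only at
octant-based points (n, m, k) with 1 ≤ k ≤ N such that t_k is H-compatible with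
the tile carried at (n, m, 0), and for every octant position (n, m) there is
exactly one such k. -/
def PrevOK {Col : Type} (N : ℕ) (tiles : Fin N → Tile Col)
    (ξ : ℕ → ℕ → Fin N) (Prev : Set Pt) : Prop :=
  (∀ p ∈ Prev, 0 ≤ p.1 ∧ (p.2.1 : ℤ) ≤ p.1 ∧
    ∃ j : Fin N, p.2.2 = (j : ℕ) + 1 ∧
      HCompat (tiles j) (tiles (ξ p.1.toNat p.2.1))) ∧
  (∀ n m : ℕ, m ≤ n → ∃! k : ℕ, ((n : ℤ), m, k) ∈ Prev)

/-- The T-octant conditions (OInit) and (OVerti) on the tile assignment. -/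
def OctBase {Col : Type} (white : Col) (N : ℕ) (tiles : Fin N → Tile Col)
    (ξ : ℕ → ℕ → Fin N) : Prop :=
  tiles (ξ 0 0) = whiteTile white ∧ tiles (ξ 1 0) ≠ whiteTile white ∧
  ∀ n m : ℕ, m + 1 ≤ n → VCompat (tiles (ξ n m)) (tiles (ξ n (m + 1)))

/-- Properness of a hyperoctant: Cur at (n, m, k) implies Prev at (n+1, m, k). -/
def Proper (N : ℕ) (ξ : ℕ → ℕ → Fin N) (Prev : Set Pt) : Prop :=
  ∀ p ∈ CurSet N ξ, ((p.1 + 1, p.2.1, p.2.2) : Pt) ∈ Prev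

/-- The query atom L(x, y) for L = { r^n s^n : n ∈ ℕ }: a path of n r-edges
followed by n s-edges, for some n. -/
def EqReach {α : Type} (r s : α → α → Prop) (d e : α) : Prop :=
  ∃ (n : ℕ) (c : α), ReachN r n d c ∧ ReachN s n c e

/-- The condition (OHori) for the octant. -/
def OHori {Col : Type} (N : ℕ) (tiles : Fin N → Tile Col)
    (ξ : ℕ → ℕ → Fin N) : Prop :=
  ∀ n m : ℕ, m ≤ n → HCompat (tiles (ξ n m)) (tiles (ξ (n + 1) m))

/-- If a white-bordered tiling system covers the octant via ξ, then there is a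
proper T-hyperoctant representing ξ (i.e., a choice of Prev satisfying the
hyperoctant constraints that makes the hyperoctant proper); conversely, the
tile map represented by any proper T-hyperoctant covers the octant. -/
theorem covering_iff_proper_hyperoctant {Col : Type} (white : Col)
    (N : ℕ) (hN : 0 < N) (tiles : Fin N → Tile Col)
    (hW : WhiteBordered (Set.range tiles) white)
    (ξ : ℕ → ℕ → Fin N) :
    ((OctBase white N tiles ξ ∧ OHori N tiles ξ) →
      ∃ Prev : Set Pt, PrevOK N tiles ξ Prev ∧ Proper N ξ Prev) ∧
    (∀ Prev : Set Pt, OctBase white N tiles ξ → PrevOK N tiles ξ Prev →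
      Proper N ξ Prev → OHori N tiles ξ) := by
  constructor
  · rintro ⟨hBase, hHori⟩
    obtain ⟨j₀, hj₀⟩ := hW.1
    have hdiag : ∀ n, tiles (ξ n n) = whiteTile white := by
      intro n
      induction n with
      | zero => exact hBase.1
      | succ n ih =>
        have h1 : (tiles (ξ (n + 1) n)).left = white := by
          have h := hHori n n le_rfl
          unfold HCompat at h
          rw [ih] at h
          exact h.symm
        have h2 : (tiles (ξ (n + 1) n)).up = white := by
          by_cases hw : tiles (ξ (n + 1) n) = whiteTile white
          · rw [hw]; rfl
          · exact (hW.2 _ ⟨_, rfl⟩ hw (Or.inl h1)).2.1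
        have h3 : (tiles (ξ (n + 1) (n + 1))).down = white := by
          have h := hBase.2.2 (n + 1) n le_rfl
          unfold VCompat at h
          rw [h2] at h
          exact h.symm
        by_contra hne
        exact (hW.2 _ ⟨_, rfl⟩ hne (Or.inr (Or.inl h3))).2.2.1 h3
    set P : Set Pt := {p | 0 ≤ p.1 ∧ (p.2.1 : ℤ) ≤ p.1 ∧
        (((p.2.1 : ℤ) < p.1 ∧ p.2.2 = (ξ (p.1.toNat - 1) p.2.1 : ℕ) + 1) ∨
         ((p.2.1 : ℤ) = p.1 ∧ p.2.2 = (j₀ : ℕ) + 1))} with hP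
    have hmem : ∀ (a : ℤ) (b c : ℕ), (((a, b, c) : Pt) ∈ P) ↔
        (0 ≤ a ∧ (b : ℤ) ≤ a ∧
        (((b : ℤ) < a ∧ c = (ξ (a.toNat - 1) b : ℕ) + 1) ∨
         ((b : ℤ) = a ∧ c = (j₀ : ℕ) + 1))) := fun _ _ _ => Iff.rfl
    refine ⟨P, ⟨?_, ?_⟩, ?_⟩
    · rintro ⟨n, m, k⟩ hp
      rw [hmem] at hp
      obtain ⟨h0, hm, hk⟩ := hp
      refine ⟨h0, hm, ?_⟩
      rcases hk with ⟨hlt, hk⟩ | ⟨heq, hk⟩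
      · refine ⟨ξ (n.toNat - 1) m, hk, ?_⟩
        have h := hHori (n.toNat - 1) m (by omega)
        rwa [show n.toNat - 1 + 1 = n.toNat by omega] at h
      · refine ⟨j₀, hk, ?_⟩
        have hnm : n.toNat = m := by omega
        unfold HCompat
        rw [hnm, hdiag m, hj₀]
        rfl

    · intro n m hmn
      rcases lt_or_eq_of_le hmn with hlt | heq
      · refine ⟨(ξ (n - 1) m : ℕ) + 1, ?_, ?_⟩
        · dsimp only
          rw [hmem]
          refine ⟨by positivity, by exact_mod_cast hmn,
            Or.inl ⟨by exact_mod_cast hlt, ?_⟩⟩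
          simp only [Int.toNat_natCast]
        · intro k hk
          rw [hmem] at hk
          rcases hk with ⟨-, -, ⟨-, hk⟩ | ⟨habs, -⟩⟩
          · simpa using hk
          · exfalso
            have : m = n := by exact_mod_cast habs
            omega
      · subst heq
        refine ⟨(j₀ : ℕ) + 1, ?_, ?_⟩
        · dsimp only
          rw [hmem]
          exact ⟨by positivity, le_rfl, Or.inr ⟨rfl, rfl⟩⟩
        · intro k hk
          rw [hmem] at hk
          rcases hk with ⟨-, -, ⟨habs, -⟩ | ⟨-, hk⟩⟩
          · simp at habs
          · exact hk
    · rintro ⟨n, m, k⟩ ⟨h0, hm, hk⟩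
      simp only at h0 hm hk
      show ((n + 1, m, k) : Pt) ∈ P
      rw [hmem]
      refine ⟨by omega, by omega, Or.inl ⟨by omega, ?_⟩⟩
      rw [show (n + 1).toNat - 1 = n.toNat by omega]
      exact hk.symm
  · intro Prev _ hPrev hProper n m hmn
    have hc : (((n : ℤ), m, (ξ n m : ℕ) + 1) : Pt) ∈ CurSet N ξ := by
      refine ⟨?_, ?_, ?_⟩ <;> simp [Int.toNat_natCast]
      exact_mod_cast hmn
    have hp := hProper _ hc
    obtain ⟨-, -, j, hj1, hj2⟩ := hPrev.1 _ hp
    simp only [Int.toNat_natCast] at hj1 hj2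
    have hji : j = ξ n m := by
      apply Fin.ext
      omega
    rw [hji, show ((n : ℤ) + 1).toNat = n + 1 by omega] at hj2
    exact hj2
end
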